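/- For ε > 0 the Fermi map T is injective on Σ_ε: if (s, θ, a, b) and (s', θ', a', b') both lie in Σ_ε = {(s, θ, a, b) : s ∈ (0, π/2), θ ∈ [0, 2π), a² + b² < 1/(ε² sin 2s)} and T(s, θ, a, b) = T(s', θ', a', b'), then s = s', θ = θ', a = a', and b = b'. Hence T defines a coordinate system on the tubular region T(Σ_ε) around Γ_ε. -/

import Mathlib

noncomputable section

open Complex Metric
open scoped Real

/-- ℂ² with the Euclidean (ℝ⁴) distance. -/
abbrev C2 : Type := EuclideanSpace ℂ (Fin 2)

/-- The point (z, w) ∈ ℂ². -/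
def pt (z w : ℂ) : C2 := (WithLp.equiv 2 (Fin 2 → ℂ)).symm ![z, w]

/-- The point of Γ with parameters (ρ, θ). -/
def gpt (ρ θ : ℝ) : C2 :=
  pt (((Real.sqrt 2 / 2 * ρ : ℝ) : ℂ) * Complex.exp ((θ : ℂ) * Complex.I))
     (((Real.sqrt 2 / 2 * ρ⁻¹ : ℝ) : ℂ) * Complex.exp ((θ : ℂ) * Complex.I))

/-- The special Lagrangian surface Γ ⊂ ℂ². -/
def Gam : Set C2 := {p | ∃ ρ θ : ℝ, 0 < ρ ∧ p = gpt ρ θ}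

/-- The point (ρ₁ e^{iθ₁}, ρ₂ e^{iθ₂}) ∈ ℂ². -/
def ppt (ρ₁ θ₁ ρ₂ θ₂ : ℝ) : C2 :=
  pt ((ρ₁ : ℂ) * Complex.exp ((θ₁ : ℂ) * Complex.I))
     ((ρ₂ : ℂ) * Complex.exp ((θ₂ : ℂ) * Complex.I))

/-- The point of Γ_ε with parameters (s, θ). -/
def gept (ε s θ : ℝ) : C2 :=
  pt (((Real.cos s / (ε * Real.sqrt (Real.sin (2 * s))) : ℝ) : ℂ)
        * Complex.exp ((θ : ℂ) * Complex.I))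
     (((Real.sin s / (ε * Real.sqrt (Real.sin (2 * s))) : ℝ) : ℂ)
        * Complex.exp ((θ : ℂ) * Complex.I))

/-- The rescaled surface Γ_ε = (1/ε)Γ. -/
def GamE (ε : ℝ) : Set C2 := {p | ∃ s θ : ℝ, s ∈ Set.Ioo 0 (π / 2) ∧ p = gept ε s θ}

/-- The Fermi (normal exponential) map around Γ_ε. -/
def fermiT (ε s θ a b : ℝ) : C2 :=
  pt (Complex.exp ((θ : ℂ) * Complex.I)
        * (((Real.cos s / (ε * Real.sqrt (Real.sin (2 * s))) : ℝ) : ℂ)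
            + ((a : ℂ) - (b : ℂ) * Complex.I) * ((Real.sin s : ℝ) : ℂ)))
     (Complex.exp ((θ : ℂ) * Complex.I)
        * (((Real.sin s / (ε * Real.sqrt (Real.sin (2 * s))) : ℝ) : ℂ)
            + ((a : ℂ) + (b : ℂ) * Complex.I) * ((Real.cos s : ℝ) : ℂ)))

end

open Real

noncomputable section FermiAux

def Ff (c k t : ℝ) : ℝ := Real.sqrt ((c + t^2)^2 + k^2)
def Xf (c k t : ℝ) : ℝ := Real.sqrt ((Ff c k t + (c + t^2))/2)
def Vf (c k t : ℝ) : ℝ := k / (2 * Xf c k t)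
def Rf (c k t : ℝ) : ℝ := (Xf c k t - t)^2 + (Vf c k t)^2
def Gf (c k t : ℝ) : ℝ := t*(1 + Rf c k t) + 2*(Xf c k t - t)

variable {c k t : ℝ}

lemma Ff_pos (hk : k ≠ 0) : 0 < Ff c k t :=
  Real.sqrt_pos.mpr (by positivity)

lemma Ff_sq : (Ff c k t)^2 = (c + t^2)^2 + k^2 :=
  Real.sq_sqrt (by positivity)

lemma Ff_add_pos (hk : k ≠ 0) : 0 < Ff c k t + (c + t^2) := by
  have h1 := Ff_pos (c := c) (t := t) hk
  have h2 := Ff_sq (c := c) (k := k) (t := t)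
  have hk2 : 0 < k^2 := by positivity
  nlinarith [sq_nonneg (Ff c k t - (c + t^2))]

lemma Xf_pos (hk : k ≠ 0) : 0 < Xf c k t :=
  Real.sqrt_pos.mpr (by have := Ff_add_pos (c := c) (t := t) hk; linarith)

lemma Xf_sq (hk : k ≠ 0) : (Xf c k t)^2 = (Ff c k t + (c + t^2))/2 :=
  Real.sq_sqrt (by have := Ff_add_pos (c := c) (t := t) hk; linarith)

lemma Vf_sq (hk : k ≠ 0) : (Vf c k t)^2 = (Ff c k t - (c + t^2))/2 := by
  have hX := Xf_pos (c := c) (t := t) hk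
  have hXs := Xf_sq (c := c) (t := t) hk
  have hFs := Ff_sq (c := c) (k := k) (t := t)
  rw [Vf, div_pow]
  rw [div_eq_iff (by positivity : ((2 * Xf c k t)^2) ≠ 0)]
  linear_combination (-1 : ℝ) * hFs - 2*(Ff c k t - (c + t^2))*hXs

lemma XV_sq (hk : k ≠ 0) : (Xf c k t)^2 + (Vf c k t)^2 = Ff c k t := by
  rw [Xf_sq hk, Vf_sq hk]; ring

lemma Rf_eq (hk : k ≠ 0) : Rf c k t = Ff c k t - 2*t*Xf c k t + t^2 := by
  have := XV_sq (c := c) (t := t) hk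
  rw [Rf]; nlinarith [this]

lemma Rf_nonneg : 0 ≤ Rf c k t := by rw [Rf]; positivity

lemma hasDerivAt_Ff (hk : k ≠ 0) :
    HasDerivAt (Ff c k) (2*t*(c + t^2)/Ff c k t) t := by
  have hg : HasDerivAt (fun t : ℝ => (c + t^2)^2 + k^2)
      (2*(c + t^2)^1*(2*t)) t := by
    have h1 : HasDerivAt (fun t : ℝ => c + t^2) (2*t) t := by
      simpa using ((hasDerivAt_pow 2 t).const_add c)
    simpa using (h1.pow 2).add_const (k^2)
  have h0 : (c + t^2)^2 + k^2 ≠ 0 := by positivity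
  have := hg.sqrt h0
  convert this using 1
  · rfl
  have hF : Real.sqrt ((c + t^2)^2 + k^2) = Ff c k t := rfl
  rw [hF]
  have := Ff_pos (c := c) (t := t) hk
  field_simp

lemma hasDerivAt_Xf (hk : k ≠ 0) :
    HasDerivAt (Xf c k) (t * Xf c k t / Ff c k t) t := by
  have hg : HasDerivAt (fun t : ℝ => (Ff c k t + (c + t^2))/2)
      ((2*t*(c + t^2)/Ff c k t + 2*t)/2) t := by
    have h1 : HasDerivAt (fun t : ℝ => c + t^2) (2*t) t := by
      simpa using ((hasDerivAt_pow 2 t).const_add c)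
    exact ((hasDerivAt_Ff hk).add h1).div_const 2
  have h0 : (Ff c k t + (c + t^2))/2 ≠ 0 := by
    have := Ff_add_pos (c := c) (t := t) hk; positivity
  have := hg.sqrt h0
  convert this using 1
  · rfl
  have hX : Real.sqrt ((Ff c k t + (c + t^2))/2) = Xf c k t := rfl
  rw [hX]
  have hF := Ff_pos (c := c) (t := t) hk
  have hXp := Xf_pos (c := c) (t := t) hk
  have hXs := Xf_sq (c := c) (t := t) hk
  field_simp
  linear_combination (2*t) * hXs

lemma hasDerivAt_Vf (hk : k ≠ 0) :
    HasDerivAt (Vf c k) (-(t * Vf c k t / Ff c k t)) t := by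
  have hX := Xf_pos (c := c) (t := t) hk
  have h2X : (2 : ℝ) * Xf c k t ≠ 0 := by positivity
  have hg : HasDerivAt (fun t : ℝ => 2 * Xf c k t) (2 * (t * Xf c k t / Ff c k t)) t :=
    (hasDerivAt_Xf hk).const_mul 2
  have := (hasDerivAt_const t k).div hg h2X
  convert this using 1
  · rfl
  · rfl
  · rfl
  have hF := Ff_pos (c := c) (t := t) hk
  rw [Vf]
  field_simp
  ring

lemma hasDerivAt_Rf (hk : k ≠ 0) :
    HasDerivAt (Rf c k) (-(2 * Xf c k t * Rf c k t / Ff c k t)) t := by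
  have h1 : HasDerivAt (fun t => Xf c k t - t) (t * Xf c k t / Ff c k t - 1) t :=
    (hasDerivAt_Xf hk).sub (hasDerivAt_id t)
  have h2 := (h1.pow 2).add ((hasDerivAt_Vf (c := c) hk).pow 2)
  convert h2 using 1
  · rfl
  · rfl
  · rfl
  have hF := Ff_pos (c := c) (t := t) hk
  have hXV := XV_sq (c := c) (t := t) hk
  have hR := Rf_eq (c := c) (t := t) hk
  field_simp
  linear_combination (-2*(Xf c k t))*hR + (2*t)*hXV

lemma hasDerivAt_Gf (hk : k ≠ 0) :
    HasDerivAt (Gf c k) ((t^2 - Rf c k t) * (1 - Rf c k t) / Ff c k t) t := by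
  have h1 : HasDerivAt (fun t => t * (1 + Rf c k t))
      (1 * (1 + Rf c k t) + t * (-(2 * Xf c k t * Rf c k t / Ff c k t))) t :=
    (hasDerivAt_id t).mul ((hasDerivAt_Rf hk).const_add 1)
  have h2 : HasDerivAt (fun t => 2 * (Xf c k t - t))
      (2 * (t * Xf c k t / Ff c k t - 1)) t :=
    ((hasDerivAt_Xf hk).sub (hasDerivAt_id t)).const_mul 2
  have h3 := h1.add h2
  convert h3 using 1
  · rfl
  · rfl
  · rfl
  have hF := Ff_pos (c := c) (t := t) hk
  have hR := Rf_eq (c := c) (t := t) hk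
  field_simp
  linear_combination (Rf c k t - 1)*hR


/-- endpoint evaluation -/
lemma Gf_endpoint {c k P α β : ℝ} (hc : c = α^2 - β^2 + 2*P*α) (hkk : k = 2*β*(α+P))
    (hpos : 0 < α + P) :
    Xf c k P = α + P ∧ Vf c k P = β ∧ Rf c k P = α^2 + β^2 ∧
      Gf c k P = P*(1+(α^2+β^2)) + 2*α := by
  have hF : Ff c k P = (α+P)^2 + β^2 := by
    rw [Ff, show (c + P^2)^2 + k^2 = (((α+P)^2 + β^2))^2 by rw [hc, hkk]; ring]
    exact Real.sqrt_sq (by positivity)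
  have hX : Xf c k P = α + P := by
    rw [Xf, hF, show ((α+P)^2 + β^2 + (c + P^2))/2 = (α+P)^2 by rw [hc]; ring]
    exact Real.sqrt_sq hpos.le
  have hV : Vf c k P = β := by
    rw [Vf, hX, hkk]
    field_simp
  refine ⟨hX, hV, ?_, ?_⟩
  · rw [Rf, hX, hV]; ring
  · rw [Gf, Rf, hX, hV]; ring

/-- The key monotonicity contradiction: two distinct parameters P < Q cannot give the same
invariants when β ≠ 0. -/
lemma coreP_lt {P Q α β α' β' : ℝ} (hP : 1 ≤ P) (hQ : 1 ≤ Q)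
    (hd : α^2 + β^2 < 1) (hd' : α'^2 + β'^2 < 1)
    (e1 : α^2 - β^2 + 2*P*α = α'^2 - β'^2 + 2*Q*α')
    (e2 : β*(P+α) = β'*(Q+α'))
    (e3 : P*(1+(α^2+β^2)) + 2*α = Q*(1+(α'^2+β'^2)) + 2*α')
    (hlt : P < Q) (hβ : β ≠ 0) : False := by
  have hα1 : -1 < α := by nlinarith [sq_nonneg β]
  have hα1' : -1 < α' := by nlinarith [sq_nonneg β']
  have hpos : 0 < α + P := by linarith
  have hpos' : 0 < α' + Q := by linarith
  set c : ℝ := α^2 - β^2 + 2*P*α with hcdef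
  set k : ℝ := 2*β*(α+P) with hkdef
  have hk : k ≠ 0 := by
    simp only [hkdef]
    exact mul_ne_zero (mul_ne_zero two_ne_zero hβ) (ne_of_gt hpos)
  obtain ⟨hX1, hV1, hR1, hG1⟩ := Gf_endpoint (c := c) (k := k) rfl rfl hpos
  have hc' : c = α'^2 - β'^2 + 2*Q*α' := by rw [hcdef]; linarith [e1]
  have hk' : k = 2*β'*(α'+Q) := by rw [hkdef]; linear_combination 2*e2
  obtain ⟨hX2, hV2, hR2, hG2⟩ := Gf_endpoint (c := c) (k := k) hc' hk' hpos'
  -- continuity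
  have hcont : Continuous (Gf c k) := by
    apply continuous_iff_continuousAt.mpr
    intro t
    exact (hasDerivAt_Gf (c := c) (t := t) hk).continuousAt
  have hcontR : Continuous (Rf c k) := by
    apply continuous_iff_continuousAt.mpr
    intro t
    exact (hasDerivAt_Rf (c := c) (t := t) hk).continuousAt
  -- R is antitone on [P,Q]
  have hRanti : AntitoneOn (Rf c k) (Set.Icc P Q) := by
    apply antitoneOn_of_deriv_nonpos (convex_Icc P Q) hcontR.continuousOn
    · intro t ht
      exact (hasDerivAt_Rf (c := c) (t := t) hk).differentiableAt.differentiableWithinAt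
    · intro t ht
      rw [(hasDerivAt_Rf (c := c) (t := t) hk).deriv]
      have h1 := Xf_pos (c := c) (t := t) hk
      have h2 := Ff_pos (c := c) (t := t) hk
      have h3 := Rf_nonneg (c := c) (k := k) (t := t)
      have h4 : 0 ≤ 2 * Xf c k t * Rf c k t / Ff c k t := by positivity
      linarith
  have hRlt : ∀ t ∈ Set.Icc P Q, Rf c k t < 1 := by
    intro t ht
    have h1 : Rf c k t ≤ Rf c k P :=
      hRanti (Set.left_mem_Icc.mpr hlt.le) ht ht.1
    rw [hR1] at h1
    linarith
  -- G is strictly monotone on [P,Q]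
  have hGmono : StrictMonoOn (Gf c k) (Set.Icc P Q) := by
    apply strictMonoOn_of_deriv_pos (convex_Icc P Q) hcont.continuousOn
    intro t ht
    rw [interior_Icc] at ht
    rw [(hasDerivAt_Gf (c := c) (t := t) hk).deriv]
    have h2 := Ff_pos (c := c) (t := t) hk
    have h3 := Rf_nonneg (c := c) (k := k) (t := t)
    have h4 : Rf c k t < 1 := hRlt t (Set.mem_Icc_of_Ioo ht)
    have h5 : 1 < t := lt_of_le_of_lt hP ht.1
    apply div_pos _ h2
    apply mul_pos _ (by linarith)
    nlinarith
  have := hGmono (Set.left_mem_Icc.mpr hlt.le) (Set.right_mem_Icc.mpr hlt.le) hlt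
  rw [hG1, hG2] at this
  linarith [e3, this]

/-- β = 0 case -/
lemma coreP_lt0 {P Q α β α' β' : ℝ} (hP : 1 ≤ P) (hQ : 1 ≤ Q)
    (hd : α^2 + β^2 < 1) (hd' : α'^2 + β'^2 < 1)
    (e1 : α^2 - β^2 + 2*P*α = α'^2 - β'^2 + 2*Q*α')
    (e2 : β*(P+α) = β'*(Q+α'))
    (e3 : P*(1+(α^2+β^2)) + 2*α = Q*(1+(α'^2+β'^2)) + 2*α')
    (hlt : P < Q) (hβ : β = 0) : False := by
  have hα1 : -1 < α := by nlinarith [sq_nonneg β]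
  have hα1' : -1 < α' := by nlinarith [sq_nonneg β']
  have hα2 : α < 1 := by nlinarith [sq_nonneg β]
  have hα2' : α' < 1 := by nlinarith [sq_nonneg β']
  have hβ' : β' = 0 := by
    have h0 : β' * (Q + α') = 0 := by rw [← e2, hβ]; ring
    rcases mul_eq_zero.mp h0 with h | h
    · exact h
    · linarith
  subst hβ hβ'
  have hU : (P+1)*(1+α)^2 = (Q+1)*(1+α')^2 := by linear_combination e3 + e1
  have hV : (P-1)*(1-α)^2 = (Q-1)*(1-α')^2 := by linear_combination e3 - e1
  have halt : α' < α := by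
    by_contra hcon
    push_neg at hcon
    nlinarith [hU, mul_nonneg (show (0:ℝ) ≤ Q+1 by linarith)
        (mul_nonneg (show (0:ℝ) ≤ α'-α by linarith) (show (0:ℝ) ≤ 2+α+α' by linarith)),
      mul_pos (show (0:ℝ) < Q-P by linarith)
        (mul_pos (show (0:ℝ) < 1+α by linarith) (show (0:ℝ) < 1+α by linarith))]
  nlinarith [hV, mul_nonneg (show (0:ℝ) ≤ Q-1 by linarith)
      (mul_nonneg (show (0:ℝ) ≤ α-α' by linarith) (show (0:ℝ) ≤ 2-α-α' by linarith)),
    mul_pos (show (0:ℝ) < Q-P by linarith)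
      (mul_pos (show (0:ℝ) < 1-α by linarith) (show (0:ℝ) < 1-α by linarith))]

/-- main core lemma -/
lemma coreP {P Q α β α' β' : ℝ} (hP : 1 ≤ P) (hQ : 1 ≤ Q)
    (hd : α^2 + β^2 < 1) (hd' : α'^2 + β'^2 < 1)
    (e1 : α^2 - β^2 + 2*P*α = α'^2 - β'^2 + 2*Q*α')
    (e2 : β*(P+α) = β'*(Q+α'))
    (e3 : P*(1+(α^2+β^2)) + 2*α = Q*(1+(α'^2+β'^2)) + 2*α') :
    P = Q ∧ α = α' ∧ β = β' := by
  have hα1 : -1 < α := by nlinarith [sq_nonneg β]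
  have hα1' : -1 < α' := by nlinarith [sq_nonneg β']
  have hPQ : P = Q := by
    rcases lt_trichotomy P Q with h | h | h
    · exfalso
      by_cases hβ : β = 0
      · exact coreP_lt0 hP hQ hd hd' e1 e2 e3 h hβ
      · exact coreP_lt hP hQ hd hd' e1 e2 e3 h hβ
    · exact h
    · exfalso
      by_cases hβ : β' = 0
      · exact coreP_lt0 hQ hP hd' hd e1.symm e2.symm e3.symm h hβ
      · exact coreP_lt hQ hP hd' hd e1.symm e2.symm e3.symm h hβ
  subst hPQ
  have key : (α - α') * ((α + α' + 2*P)^2 + (β + β')^2) = 0 := by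
    linear_combination (α + α' + 2*P)*e1 + (2*(β + β'))*e2
  have hpos : 0 < (α + α' + 2*P)^2 + (β + β')^2 := by
    have : 0 < α + α' + 2*P := by linarith
    positivity
  have hαα : α = α' := by
    have := (mul_eq_zero.mp key).resolve_right (ne_of_gt hpos)
    linarith
  subst hαα
  refine ⟨rfl, rfl, ?_⟩
  have : β * (P + α) = β' * (P + α) := by linarith [e2]
  exact mul_right_cancel₀ (by linarith : P + α ≠ 0) this


/-- core lemma in unscaled variables -/
lemma coreU {ε u u' a b a' b' : ℝ} (hε : 0 < ε) (hu : 0 < u) (hu' : 0 < u')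
    (hP : 1 ≤ ε^2*u^2) (hP' : 1 ≤ ε^2*u'^2)
    (hfoc : a^2+b^2 < u^2) (hfoc' : a'^2+b'^2 < u'^2)
    (E1 : u'^2*(a^2-b^2) + 2*ε^2*u^3*u'^2*a = u^2*(a'^2-b'^2) + 2*ε^2*u'^3*u^2*a')
    (E2 : u'^2*a*b + ε^2*u^3*u'^2*b = u^2*a'*b' + ε^2*u'^3*u^2*b')
    (E3 : ε^2*u*u'*(u^2+a^2+b^2) + 2*a*u' = ε^2*u*u'*(u'^2+a'^2+b'^2) + 2*a'*u) :
    u = u' ∧ a = a' ∧ b = b' := by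
  have hu0 := hu.ne'
  have hu0' := hu'.ne'
  have hd : (a/u)^2 + (b/u)^2 < 1 := by
    rw [div_pow, div_pow, ← add_div, div_lt_one (by positivity)]
    exact hfoc
  have hd' : (a'/u')^2 + (b'/u')^2 < 1 := by
    rw [div_pow, div_pow, ← add_div, div_lt_one (by positivity)]
    exact hfoc'
  have e1 : (a/u)^2 - (b/u)^2 + 2*(ε^2*u^2)*(a/u)
      = (a'/u')^2 - (b'/u')^2 + 2*(ε^2*u'^2)*(a'/u') := by
    field_simp
    linear_combination E1
  have e2 : (b/u)*((ε^2*u^2)+(a/u)) = (b'/u')*((ε^2*u'^2)+(a'/u')) := by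
    field_simp
    linear_combination E2
  have e3 : (ε^2*u^2)*(1+((a/u)^2+(b/u)^2)) + 2*(a/u)
      = (ε^2*u'^2)*(1+((a'/u')^2+(b'/u')^2)) + 2*(a'/u') := by
    field_simp
    linear_combination E3
  obtain ⟨hPQ, hαα, hββ⟩ := coreP hP hP' hd hd' e1 e2 e3
  have h2 : u^2 = u'^2 := mul_left_cancel₀ (by positivity : (ε:ℝ)^2 ≠ 0) hPQ
  have huu : u = u' := by
    have h3 : (u - u')*(u + u') = 0 := by linear_combination h2
    rcases mul_eq_zero.mp h3 with h | h
    · linarith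
    · linarith
  subst huu
  refine ⟨rfl, ?_, ?_⟩
  · have := (div_eq_div_iff hu0 hu0).mp hαα
    exact mul_right_cancel₀ hu0 this
  · have := (div_eq_div_iff hu0 hu0).mp hββ
    exact mul_right_cancel₀ hu0 this

end FermiAux


noncomputable section

open Complex Metric
open scoped Real

lemma theta_unique {θ θ' : ℝ} (hθ : θ ∈ Set.Ico 0 (2 * π)) (hθ' : θ' ∈ Set.Ico 0 (2 * π))
    (m : ℤ) (h : θ = θ' + m * (2 * π)) : θ = θ' := by
  obtain ⟨hθ0, hθ1⟩ := hθ
  obtain ⟨hθ0', hθ1'⟩ := hθ'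
  have hπ := Real.pi_pos
  have h2π : (0:ℝ) < 2*π := by linarith
  have hub : (m : ℝ) < 1 := by
    have h1 : (m:ℝ)*(2*π) < 1*(2*π) := by nlinarith
    exact lt_of_mul_lt_mul_right (by linarith) h2π.le
  have hlb : (-1 : ℝ) < (m : ℝ) := by
    have h1 : (-1:ℝ)*(2*π) < (m:ℝ)*(2*π) := by nlinarith
    exact lt_of_mul_lt_mul_right (by linarith) h2π.le
  have hlb' : (-1 : ℤ) < m := by exact_mod_cast hlb
  have hub' : m < 1 := by exact_mod_cast hub
  have hm0 : m = 0 := by omega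
  rw [hm0] at h
  simpa using h

theorem fermi_injective (ε : ℝ) (hε : 0 < ε)
    (s θ a b s' θ' a' b' : ℝ)
    (hs : s ∈ Set.Ioo 0 (π / 2)) (hθ : θ ∈ Set.Ico 0 (2 * π))
    (hab : a ^ 2 + b ^ 2 < 1 / (ε ^ 2 * Real.sin (2 * s)))
    (hs' : s' ∈ Set.Ioo 0 (π / 2)) (hθ' : θ' ∈ Set.Ico 0 (2 * π))
    (hab' : a' ^ 2 + b' ^ 2 < 1 / (ε ^ 2 * Real.sin (2 * s')))
    (heq : fermiT ε s θ a b = fermiT ε s' θ' a' b') :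
    s = s' ∧ θ = θ' ∧ a = a' ∧ b = b' := by
  obtain ⟨hs1, hs2⟩ := hs
  obtain ⟨hs1', hs2'⟩ := hs'
  have hπ := Real.pi_pos
  -- basic trigonometric facts
  have hσ : 0 < Real.sin (2 * s) := Real.sin_pos_of_pos_of_lt_pi (by linarith) (by linarith)
  have hσ' : 0 < Real.sin (2 * s') := Real.sin_pos_of_pos_of_lt_pi (by linarith) (by linarith)
  have hσ1 : Real.sin (2 * s) ≤ 1 := Real.sin_le_one _
  have hσ1' : Real.sin (2 * s') ≤ 1 := Real.sin_le_one _
  have hq : 0 < Real.sqrt (Real.sin (2 * s)) := Real.sqrt_pos.mpr hσ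
  have hq' : 0 < Real.sqrt (Real.sin (2 * s')) := Real.sqrt_pos.mpr hσ'
  have hq2 : Real.sqrt (Real.sin (2 * s)) ^ 2 = Real.sin (2 * s) := Real.sq_sqrt hσ.le
  have hq2' : Real.sqrt (Real.sin (2 * s')) ^ 2 = Real.sin (2 * s') := Real.sq_sqrt hσ'.le
  have h2s : Real.sin (2 * s) = 2 * Real.sin s * Real.cos s := Real.sin_two_mul s
  have h2s' : Real.sin (2 * s') = 2 * Real.sin s' * Real.cos s' := Real.sin_two_mul s'
  have hpy : Real.sin s ^ 2 + Real.cos s ^ 2 = 1 := Real.sin_sq_add_cos_sq s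
  have hpy' : Real.sin s' ^ 2 + Real.cos s' ^ 2 = 1 := Real.sin_sq_add_cos_sq s'
  have hsin : 0 < Real.sin s := Real.sin_pos_of_pos_of_lt_pi hs1 (by linarith)
  have hsin' : 0 < Real.sin s' := Real.sin_pos_of_pos_of_lt_pi hs1' (by linarith)
  have hcos : 0 < Real.cos s := Real.cos_pos_of_mem_Ioo ⟨by linarith, hs2⟩
  have hcos' : 0 < Real.cos s' := Real.cos_pos_of_mem_Ioo ⟨by linarith, hs2'⟩
  -- the scaling factors
  obtain ⟨u, hudef⟩ : ∃ u : ℝ, u = (ε * Real.sqrt (Real.sin (2 * s)))⁻¹ := ⟨_, rfl⟩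
  obtain ⟨u', hudef'⟩ : ∃ v : ℝ, v = (ε * Real.sqrt (Real.sin (2 * s')))⁻¹ := ⟨_, rfl⟩
  have hu : 0 < u := by rw [hudef]; positivity
  have hu' : 0 < u' := by rw [hudef']; positivity
  have hrel : 2 * (Real.sin s * Real.cos s) * ε ^ 2 * u ^ 2 = 1 := by
    rw [hudef]
    field_simp
    linear_combination (-1) * hq2 + (-1) * h2s
  have hrel' : 2 * (Real.sin s' * Real.cos s') * ε ^ 2 * u' ^ 2 = 1 := by
    rw [hudef']
    field_simp
    linear_combination (-1) * hq2' + (-1) * h2s'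
  have hu2 : u ^ 2 = 1 / (ε ^ 2 * Real.sin (2 * s)) := by
    rw [hudef]
    field_simp
    linear_combination (-1) * hq2
  have hu2' : u' ^ 2 = 1 / (ε ^ 2 * Real.sin (2 * s')) := by
    rw [hudef']
    field_simp
    linear_combination (-1) * hq2'
  have hfoc : a ^ 2 + b ^ 2 < u ^ 2 := by rw [hu2]; exact hab
  have hfoc' : a' ^ 2 + b' ^ 2 < u' ^ 2 := by rw [hu2']; exact hab'
  have hP : 1 ≤ ε ^ 2 * u ^ 2 := by
    have h2nc : 2 * (Real.sin s * Real.cos s) ≤ 1 := by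
      rw [h2s] at hσ1; linarith
    have hkey : 0 ≤ (ε ^ 2 * u ^ 2) * (1 - 2 * (Real.sin s * Real.cos s)) :=
      mul_nonneg (by positivity) (by linarith)
    linarith [hkey, hrel]
  have hP' : 1 ≤ ε ^ 2 * u' ^ 2 := by
    have h2nc : 2 * (Real.sin s' * Real.cos s') ≤ 1 := by
      rw [h2s'] at hσ1'; linarith
    have hkey : 0 ≤ (ε ^ 2 * u' ^ 2) * (1 - 2 * (Real.sin s' * Real.cos s')) :=
      mul_nonneg (by positivity) (by linarith)
    linarith [hkey, hrel']
  -- extract the two complex component equations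
  have h := congrArg (WithLp.equiv 2 (Fin 2 → ℂ)) heq
  simp only [fermiT, pt, Equiv.apply_symm_apply] at h
  have h1 := congrFun h 0
  have h2 := congrFun h 1
  simp only [Matrix.cons_val_zero, Matrix.cons_val_one, Matrix.head_cons] at h1 h2
  have hdc : Real.cos s / (ε * Real.sqrt (Real.sin (2 * s))) = Real.cos s * u := by
    rw [hudef]; exact div_eq_mul_inv _ _
  have hds : Real.sin s / (ε * Real.sqrt (Real.sin (2 * s))) = Real.sin s * u := by
    rw [hudef]; exact div_eq_mul_inv _ _
  have hdc' : Real.cos s' / (ε * Real.sqrt (Real.sin (2 * s'))) = Real.cos s' * u' := by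
    rw [hudef']; exact div_eq_mul_inv _ _
  have hds' : Real.sin s' / (ε * Real.sqrt (Real.sin (2 * s'))) = Real.sin s' * u' := by
    rw [hudef']; exact div_eq_mul_inv _ _
  rw [hdc, hdc'] at h1
  rw [hds, hds'] at h2
  -- remove the phase factors using conjugation
  have hE : ∀ t : ℝ, Complex.exp ((t : ℂ) * Complex.I)
      * (starRingEnd ℂ) (Complex.exp ((t : ℂ) * Complex.I)) = 1 := by
    intro t
    rw [← Complex.exp_conj, ← Complex.exp_add]
    simp [Complex.conj_I]
  have hQc := congrArg₂ (· * ·) h1 (congrArg (starRingEnd ℂ) h2)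
  simp only [map_mul] at hQc
  rw [mul_mul_mul_comm, mul_mul_mul_comm (Complex.exp ((θ' : ℂ) * Complex.I)),
    hE, hE, one_mul, one_mul] at hQc
  have hN1c := congrArg₂ (· * ·) h1 (congrArg (starRingEnd ℂ) h1)
  simp only [map_mul] at hN1c
  rw [mul_mul_mul_comm, mul_mul_mul_comm (Complex.exp ((θ' : ℂ) * Complex.I)),
    hE, hE, one_mul, one_mul] at hN1c
  have hN2c := congrArg₂ (· * ·) h2 (congrArg (starRingEnd ℂ) h2)
  simp only [map_mul] at hN2c
  rw [mul_mul_mul_comm, mul_mul_mul_comm (Complex.exp ((θ' : ℂ) * Complex.I)),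
    hE, hE, one_mul, one_mul] at hN2c
  -- real and imaginary parts
  simp only [map_add, map_mul, map_sub, Complex.conj_ofReal, Complex.conj_I] at hQc hN1c hN2c
  rw [Complex.ext_iff] at hQc hN1c hN2c
  obtain ⟨hre, him⟩ := hQc
  obtain ⟨hn1, -⟩ := hN1c
  obtain ⟨hn2, -⟩ := hN2c
  simp only [Complex.add_re, Complex.add_im, Complex.mul_re, Complex.mul_im, Complex.sub_re,
    Complex.sub_im, Complex.ofReal_re, Complex.ofReal_im, Complex.I_re, Complex.I_im,
    Complex.neg_re, Complex.neg_im, mul_zero, mul_one, zero_mul, sub_zero, zero_sub,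
    add_zero, zero_add, neg_zero, neg_neg] at hre him hn1 hn2
  -- the three invariant equations, in unscaled form
  have E1 : u' ^ 2 * (a ^ 2 - b ^ 2) + 2 * ε ^ 2 * u ^ 3 * u' ^ 2 * a
      = u ^ 2 * (a' ^ 2 - b' ^ 2) + 2 * ε ^ 2 * u' ^ 3 * u ^ 2 * a' := by
    linear_combination (2 * ε ^ 2 * u ^ 2 * u' ^ 2) * hre
      - (u ^ 2 * u' ^ 2 + u' ^ 2 * (a ^ 2 - b ^ 2)) * hrel
      + (u ^ 2 * u' ^ 2 + u ^ 2 * (a' ^ 2 - b' ^ 2)) * hrel'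
      - (2 * ε ^ 2 * u ^ 3 * u' ^ 2 * a) * hpy
      + (2 * ε ^ 2 * u' ^ 3 * u ^ 2 * a') * hpy'
  have E2 : u' ^ 2 * a * b + ε ^ 2 * u ^ 3 * u' ^ 2 * b
      = u ^ 2 * a' * b' + ε ^ 2 * u' ^ 3 * u ^ 2 * b' := by
    linear_combination (-(ε ^ 2 * u ^ 2 * u' ^ 2)) * him
      - (ε ^ 2 * u ^ 3 * u' ^ 2 * b) * hpy
      + (ε ^ 2 * u' ^ 3 * u ^ 2 * b') * hpy'
      - (a * b * u' ^ 2) * hrel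
      + (a' * b' * u ^ 2) * hrel'
  have E3 : ε ^ 2 * u * u' * (u ^ 2 + a ^ 2 + b ^ 2) + 2 * a * u'
      = ε ^ 2 * u * u' * (u' ^ 2 + a' ^ 2 + b' ^ 2) + 2 * a' * u := by
    linear_combination (ε ^ 2 * u * u') * hn1 + (ε ^ 2 * u * u') * hn2
      - (ε ^ 2 * u * u' * (u ^ 2 + a ^ 2 + b ^ 2)) * hpy
      + (ε ^ 2 * u * u' * (u' ^ 2 + a' ^ 2 + b' ^ 2)) * hpy'
      - (2 * a * u') * hrel
      + (2 * a' * u) * hrel'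
  obtain ⟨huu, haa, hbb⟩ := coreU hε hu hu' hP hP' hfoc hfoc' E1 E2 E3
  -- recover s = s'
  have hnc : Real.sin s * Real.cos s = Real.sin s' * Real.cos s' := by
    have h0 : (Real.sin s * Real.cos s - Real.sin s' * Real.cos s') * (2 * ε ^ 2 * u ^ 2) = 0 := by
      linear_combination hrel - hrel' - (2*ε^2*Real.sin s'*Real.cos s'*(u+u'))*huu
    rcases mul_eq_zero.mp h0 with h | h
    · linarith
    · exfalso
      have hposq : (0:ℝ) < 2 * ε ^ 2 * u ^ 2 := by positivity
      linarith
  rw [← huu, ← haa, ← hbb] at hn1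
  have hkey : (Real.sin s ^ 2 - Real.sin s' ^ 2) * (u ^ 2 - (a ^ 2 + b ^ 2)) = 0 := by
    linear_combination (-1 : ℝ) * hn1 + u ^ 2 * hpy - u ^ 2 * hpy' + (2 * a * u) * hnc
  have hss2 : Real.sin s ^ 2 = Real.sin s' ^ 2 := by
    rcases mul_eq_zero.mp hkey with h | h
    · linarith
    · exfalso; linarith
  have hsins : Real.sin s = Real.sin s' := by
    have h3 : (Real.sin s - Real.sin s') * (Real.sin s + Real.sin s') = 0 := by
      linear_combination hss2
    rcases mul_eq_zero.mp h3 with h | h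
    · linarith
    · exfalso; linarith
  have hss : s = s' :=
    Real.injOn_sin ⟨by linarith, by linarith⟩ ⟨by linarith, by linarith⟩ hsins
  -- recover θ = θ'
  rw [← hss, ← haa, ← hbb, ← huu] at h1 h2
  have hBne : ((Real.sin s * u : ℝ) : ℂ) + ((a : ℂ) + (b : ℂ) * Complex.I) * ((Real.cos s : ℝ) : ℂ) ≠ 0
      ∨ ((Real.cos s * u : ℝ) : ℂ) + ((a : ℂ) - (b : ℂ) * Complex.I) * ((Real.sin s : ℝ) : ℂ) ≠ 0 := by
    by_contra hcon
    push_neg at hcon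
    obtain ⟨hB0, hA0⟩ := hcon
    rw [Complex.ext_iff] at hA0 hB0
    obtain ⟨hA0re, -⟩ := hA0
    obtain ⟨hB0re, -⟩ := hB0
    simp only [Complex.add_re, Complex.mul_re, Complex.sub_re, Complex.sub_im, Complex.add_im,
      Complex.ofReal_re, Complex.ofReal_im, Complex.I_re, Complex.I_im, Complex.zero_re,
      mul_zero, mul_one, zero_mul, sub_zero, zero_sub, add_zero, zero_add, neg_zero] at hA0re hB0re
    have hz : Real.sin s * (a ^ 2 - u ^ 2) = 0 := by
      linear_combination a * hA0re - u * hB0re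
    rcases mul_eq_zero.mp hz with h | h
    · linarith
    · have hb2 := sq_nonneg b
      linarith
  have hEE : Complex.exp ((θ : ℂ) * Complex.I) = Complex.exp ((θ' : ℂ) * Complex.I) := by
    rcases hBne with hB | hA
    · exact mul_right_cancel₀ hB h2
    · exact mul_right_cancel₀ hA h1
  rw [Complex.exp_eq_exp_iff_exists_int] at hEE
  obtain ⟨m, hm⟩ := hEE
  have him2 := congrArg Complex.im hm
  simp only [Complex.add_im, Complex.mul_im, Complex.mul_re, Complex.ofReal_re, Complex.ofReal_im,
    Complex.I_re, Complex.I_im, Complex.intCast_re, Complex.intCast_im, Complex.re_ofNat,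
    Complex.im_ofNat, mul_zero, mul_one, zero_mul, sub_zero, zero_sub, add_zero, zero_add,
    neg_zero, zero_add] at him2
  exact ⟨hss, theta_unique hθ hθ' m him2, haa, hbb⟩

end
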